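/- Let A and B be independent nonnegative random variables on a probability space with B integrable and E[B] ≤ 1. If P({A > 1 and AB < 1} ∪ {A < 1 and AB > 1}) > 0, then the strict inequality E[min(1, AB)] < E[min(1, A)] holds. -/

import Mathlib

open MeasureTheory ProbabilityTheory

/-- Strict version: for independent nonnegative random variables `A`, `B` with `B`
integrable and `E[B] ≤ 1`, if `P(A > 1 > AB or A < 1 < AB) > 0` then
`E[min(1, A*B)] < E[min(1, A)]`. -/
theorem expectation_min_one_mul_lt_of_expectation_le_one
    {Ω : Type*} [MeasurableSpace Ω] (μ : Measure Ω) [IsProbabilityMeasure μ]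
    (A B : Ω → ℝ) (hA : Measurable A) (hB : Measurable B)
    (hA0 : ∀ ω, 0 ≤ A ω) (hB0 : ∀ ω, 0 ≤ B ω)
    (hBint : Integrable B μ) (hEB : ∫ ω, B ω ∂μ ≤ 1)
    (hind : IndepFun A B μ)
    (hpos : 0 < μ {ω | (1 < A ω ∧ A ω * B ω < 1) ∨ (A ω < 1 ∧ 1 < A ω * B ω)}) :
    ∫ ω, min 1 (A ω * B ω) ∂μ < ∫ ω, min 1 (A ω) ∂μ := by
  classical
  set φ : ℝ → ℝ := fun x => if x < 1 then x else 0 with hφdef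
  set ψ : ℝ → ℝ := fun x => 1 - x with hψdef
  have hφm : Measurable φ := by
    apply Measurable.ite (measurableSet_lt measurable_id measurable_const) measurable_id
      measurable_const
  have hψm : Measurable ψ := measurable_const.sub measurable_id
  set f : Ω → ℝ := fun ω => min 1 (A ω * B ω) with hfdef
  set h : Ω → ℝ := fun ω => φ (A ω) * ψ (B ω) with hhdef
  set g : Ω → ℝ := fun ω => min 1 (A ω) - f ω - h ω with hgdef
  have hf_meas : Measurable f := measurable_const.min (hA.mul hB)
  have hm_meas : Measurable (fun ω => min 1 (A ω)) := measurable_const.min hA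
  -- integrability
  have hf_int : Integrable f μ := by
    refine (integrable_const (1 : ℝ)).mono' hf_meas.aestronglyMeasurable ?_
    filter_upwards with ω
    have h1 : 0 ≤ f ω := le_min zero_le_one (mul_nonneg (hA0 ω) (hB0 ω))
    have h2 : f ω ≤ 1 := min_le_left _ _
    rw [Real.norm_eq_abs, abs_le]
    constructor <;> linarith
  have hm_int : Integrable (fun ω => min 1 (A ω)) μ := by
    refine (integrable_const (1 : ℝ)).mono' hm_meas.aestronglyMeasurable ?_
    filter_upwards with ω
    have h1 : 0 ≤ min 1 (A ω) := le_min zero_le_one (hA0 ω)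
    have h2 : min 1 (A ω) ≤ 1 := min_le_left _ _
    rw [Real.norm_eq_abs, abs_le]
    constructor <;> linarith
  have hψB_int : Integrable (fun ω => ψ (B ω)) μ := (integrable_const (1 : ℝ)).sub hBint
  have hh_int : Integrable h μ := by
    refine hψB_int.bdd_mul ((hφm.comp hA).aestronglyMeasurable) (c := 1) (Filter.Eventually.of_forall fun ω => ?_)
    by_cases hlt : A ω < 1
    · simp only [hφdef, if_pos hlt, Real.norm_eq_abs, abs_le]
      constructor <;> [linarith [hA0 ω]; linarith]
    · simp [hφdef, if_neg hlt]
  have hg_int : Integrable g μ := (hm_int.sub hf_int).sub hh_int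
  -- pointwise nonnegativity
  have hg0 : ∀ ω, 0 ≤ g ω := by
    intro ω
    simp only [hgdef, hhdef, hfdef, hφdef, hψdef]
    by_cases hlt : A ω < 1
    · rw [if_pos hlt, min_eq_right hlt.le]
      have : min 1 (A ω * B ω) ≤ A ω * B ω := min_le_right _ _
      nlinarith
    · rw [if_neg hlt]
      have h2 : min 1 (A ω * B ω) ≤ 1 := min_le_left _ _
      push_neg at hlt
      rw [min_eq_left hlt]
      linarith
  -- strict positivity on the event
  have hsub : {ω | (1 < A ω ∧ A ω * B ω < 1) ∨ (A ω < 1 ∧ 1 < A ω * B ω)} ⊆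
      Function.support g := by
    intro ω hω
    rcases hω with ⟨h1, h2⟩ | ⟨h1, h2⟩
    · have : 0 < g ω := by
        simp only [hgdef, hhdef, hfdef, hφdef, hψdef, if_neg (not_lt.2 h1.le),
          min_eq_left h1.le, min_eq_right h2.le]
        linarith
      exact fun hc => by rw [hc] at this; exact lt_irrefl 0 this
    · have : 0 < g ω := by
        simp only [hgdef, hhdef, hfdef, hφdef, hψdef, if_pos h1,
          min_eq_right h1.le, min_eq_left h2.le]
        nlinarith
      exact fun hc => by rw [hc] at this; exact lt_irrefl 0 this
  have hgpos : 0 < ∫ ω, g ω ∂μ := by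
    rw [integral_pos_iff_support_of_nonneg hg0 hg_int]
    exact lt_of_lt_of_le hpos (measure_mono hsub)
  -- the correction term is nonnegative
  have hh0 : 0 ≤ ∫ ω, h ω ∂μ := by
    have hind' : IndepFun (fun ω => φ (A ω)) (fun ω => ψ (B ω)) μ :=
      hind.comp hφm hψm
    have := hind'.integral_mul_eq_mul_integral ((hφm.comp hA).aestronglyMeasurable)
      (hψm.comp hB).aestronglyMeasurable
    have heq : ∫ ω, h ω ∂μ = (∫ ω, φ (A ω) ∂μ) * ∫ ω, ψ (B ω) ∂μ := this
    rw [heq]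
    apply mul_nonneg
    · apply integral_nonneg
      intro ω
      by_cases hlt : A ω < 1
      · simp only [hφdef, if_pos hlt]; exact hA0 ω
      · simp [hφdef, if_neg hlt]
    · have : ∫ ω, ψ (B ω) ∂μ = 1 - ∫ ω, B ω ∂μ := by
        simp only [hψdef]
        rw [integral_sub (integrable_const 1) hBint, integral_const]
        simp
      rw [this]; linarith
  -- conclude
  have hdecomp : ∫ ω, min 1 (A ω) ∂μ = (∫ ω, f ω ∂μ) + ((∫ ω, g ω ∂μ) + ∫ ω, h ω ∂μ) := by
    have heq : (fun ω => min 1 (A ω)) = fun ω => f ω + (g ω + h ω) := by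
      funext ω
      simp only [hgdef]
      ring
    have hgh : Integrable (fun ω => g ω + h ω) μ := hg_int.add hh_int
    have hgh2 : Integrable (fun ω => h ω) μ := hh_int
    have hg2 : Integrable (fun ω => g ω) μ := hg_int
    rw [heq, integral_add hf_int hgh, integral_add hg2 hgh2]
  calc ∫ ω, min 1 (A ω * B ω) ∂μ = ∫ ω, f ω ∂μ := rfl
    _ < (∫ ω, f ω ∂μ) + ((∫ ω, g ω ∂μ) + ∫ ω, h ω ∂μ) := by linarith
    _ = ∫ ω, min 1 (A ω) ∂μ := hdecomp.symm
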